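/- Let (M,g) be a Riemannian manifold with a geometry with parallel skew-symmetric torsion (τ a 3-form, ∇^τ = ∇^g + τ, ∇^τ τ = 0). Suppose T M = T₁ ⊕ T₂ is an orthogonal ∇^τ-parallel decomposition and τ = τ₁ + τ₂ with τᵢ ∈ Γ(Λ³ Tᵢ*). Then T₁ and T₂ are parallel with respect to the Levi-Civita connection ∇^g. -/
import Mathlib


/-- Abstract algebraic model of a geometry with parallel skew-symmetric
torsion: `X` = vector fields (a Lie algebra and a module over the functions `F`), `g` the
metric, `nabla` the Levi-Civita connection, `τ` a 3-form viewed as a (2,1)-tensor, and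
`∇^τ = ∇^g + τ` with `∇^τ τ = 0`. Suppose `T M = T₁ ⊕ T₂` is an orthogonal
`∇^τ`-parallel decomposition and `τ = τ₁ + τ₂ ∈ Λ³T₁ ⊕ Λ³T₂` (equivalently, as a
(2,1)-tensor, `τ y x ∈ Tᵢ` whenever `x ∈ Tᵢ`). Then `T₁` and `T₂` are parallel with
respect to the Levi-Civita connection `∇^g`. -/
theorem stmt5 {F X : Type*} [CommRing F] [LieRing X] [Module F X]
    (D : X → F → F)
    (g : X → X → F)
    (hgsymm : ∀ x y : X, g x y = g y x)
    (nabla : X → X → X)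
    (htorsionfree : ∀ x y : X, nabla x y - nabla y x = ⁅x, y⁆)
    (hmetric : ∀ x y z : X, D x (g y z) = g (nabla x y) z + g y (nabla x z))
    (τ : X → X → X)
    (hτanti : ∀ x y : X, τ x y = - τ y x)
    (hτskew : ∀ x y z : X, g (τ x y) z = - g (τ x z) y)
    -- the torsion is `∇^τ`-parallel: `(∇^τ_z τ)(x,y) = 0`
    (hτpar : ∀ z x y : X,
      (nabla z (τ x y) + τ z (τ x y)) - τ (nabla z x + τ z x) y - τ x (nabla z y + τ z y) = 0)
    (T₁ T₂ : Submodule F X)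
    (horth : ∀ a ∈ T₁, ∀ b ∈ T₂, g a b = 0)
    (hspan : T₁ ⊔ T₂ = ⊤)
    -- `T₁` and `T₂` are `∇^τ`-parallel
    (hpar1 : ∀ y : X, ∀ a ∈ T₁, nabla y a + τ y a ∈ T₁)
    (hpar2 : ∀ y : X, ∀ b ∈ T₂, nabla y b + τ y b ∈ T₂)
    -- `τ = τ₁ + τ₂ ∈ Λ³T₁ ⊕ Λ³T₂`, expressed on the (2,1)-tensor
    (hτ1 : ∀ y : X, ∀ a ∈ T₁, τ y a ∈ T₁)
    (hτ2 : ∀ y : X, ∀ b ∈ T₂, τ y b ∈ T₂) :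
    (∀ y : X, ∀ a ∈ T₁, nabla y a ∈ T₁) ∧ (∀ y : X, ∀ b ∈ T₂, nabla y b ∈ T₂) := by
  refine ⟨fun y a ha => ?_, fun y b hb => ?_⟩
  · have := T₁.sub_mem (hpar1 y a ha) (hτ1 y a ha)
    simpa using this
  · have := T₂.sub_mem (hpar2 y b hb) (hτ2 y b hb)
    simpa using this
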